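/- In R = K[x_1,...,x_8], let I be the square-free monomial ideal generated by the 44 degree-4 monomials: x1x2x3x4, x1x2x3x5, x1x2x3x6, x1x2x3x8, x1x2x4x7, x1x2x5x7, x1x2x6x7, x1x2x7x8, x1x3x4x7, x1x3x4x8, x1x3x5x7, x1x3x5x8, x1x3x6x7, x1x3x6x8, x1x3x7x8, x1x4x7x8, x1x5x7x8, x1x6x7x8, x2x3x4x5, x2x3x4x6, x2x3x4x7, x2x3x5x6, x2x3x5x7, x2x3x5x8, x2x3x6x7, x2x3x6x8, x2x3x7x8, x2x4x5x7, x2x4x6x7, x2x5x6x7, x2x5x7x8, x2x6x7x8, x3x4x5x7, x3x4x5x8, x3x4x6x7, x3x4x6x8, x3x4x7x8, x3x5x6x7, x3x5x6x8, x3x5x7x8, x3x6x7x8, x4x5x7x8, x4x6x7x8, x5x6x7x8. Then the colon ideal (I^2 : x1x2x3x5x6x7x8) equals the maximal ideal (x_1,...,x_8). -/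

import Mathlib

open MvPolynomial

/-- The square-free monomial `∏_{i ∈ S} x_i`. -/
noncomputable def sqMon (K : Type*) [Field K] {n : ℕ} (S : Finset (Fin n)) :
    MvPolynomial (Fin n) K := ∏ i ∈ S, X i

/-- The square-free monomial ideal generated by the monomials with supports in `B`. -/
noncomputable def matIdeal (K : Type*) [Field K] {n : ℕ} (B : Finset (Finset (Fin n))) :
    Ideal (MvPolynomial (Fin n) K) := Ideal.span (sqMon K '' ↑B)

/-- `B` is the set of bases (supports of the minimal generators) of a matroidal ideal of
degree `d`: all members have cardinality `d` and the matroid basis-exchange property holds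
(this is the square-free case of the polymatroidal exchange property). -/
def IsMatroidalBases {n : ℕ} (d : ℕ) (B : Finset (Finset (Fin n))) : Prop :=
  B.Nonempty ∧ (∀ S ∈ B, S.card = d) ∧
    ∀ S ∈ B, ∀ T ∈ B, ∀ i ∈ S, i ∉ T → ∃ j ∈ T, j ∉ S ∧ insert j (S.erase i) ∈ B

/-- The graded maximal ideal `(x_1, …, x_n)`. -/
noncomputable def maxIdeal (K : Type*) [Field K] (n : ℕ) : Ideal (MvPolynomial (Fin n) K) :=
  Ideal.span (Set.range X)

/-- `Ass(R/I^t)`. -/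
noncomputable def AssPow (K : Type*) [Field K] {n : ℕ} (I : Ideal (MvPolynomial (Fin n) K))
    (t : ℕ) : Set (Ideal (MvPolynomial (Fin n) K)) :=
  associatedPrimes (MvPolynomial (Fin n) K) (MvPolynomial (Fin n) K ⧸ I ^ t)

/-- `p ∈ Ass^∞(I)`: `p` is an associated prime of all large powers of `I`. -/
def memAssInfty (K : Type*) [Field K] {n : ℕ} (I p : Ideal (MvPolynomial (Fin n) K)) : Prop :=
  ∃ l, ∀ t, l ≤ t → p ∈ AssPow K I t

/-- `depth (R/I^t)`: the maximal length of a regular sequence on `R/I^t` consisting of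
elements of the maximal ideal. -/
noncomputable def qDepth (K : Type*) [Field K] {n : ℕ} (I : Ideal (MvPolynomial (Fin n) K))
    (t : ℕ) : ℕ :=
  sSup {k | ∃ rs : List (MvPolynomial (Fin n) K), rs.length = k ∧
    (∀ r ∈ rs, r ∈ maxIdeal K n) ∧
    RingTheory.Sequence.IsRegular (MvPolynomial (Fin n) K ⧸ I ^ t) rs}

/-- The 44 supports of the degree-4 generators of the ideal of the counterexample
(variables are 0-indexed: `x_{i+1}` corresponds to index `i`). -/
def exBases : Finset (Finset (Fin 8)) :=
  { {0, 1, 2, 3},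
    {0, 1, 2, 4},
    {0, 1, 2, 5},
    {0, 1, 2, 7},
    {0, 1, 3, 6},
    {0, 1, 4, 6},
    {0, 1, 5, 6},
    {0, 1, 6, 7},
    {0, 2, 3, 6},
    {0, 2, 3, 7},
    {0, 2, 4, 6},
    {0, 2, 4, 7},
    {0, 2, 5, 6},
    {0, 2, 5, 7},
    {0, 2, 6, 7},
    {0, 3, 6, 7},
    {0, 4, 6, 7},
    {0, 5, 6, 7},
    {1, 2, 3, 4},
    {1, 2, 3, 5},
    {1, 2, 3, 6},
    {1, 2, 4, 5},
    {1, 2, 4, 6},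
    {1, 2, 4, 7},
    {1, 2, 5, 6},
    {1, 2, 5, 7},
    {1, 2, 6, 7},
    {1, 3, 4, 6},
    {1, 3, 5, 6},
    {1, 4, 5, 6},
    {1, 4, 6, 7},
    {1, 5, 6, 7},
    {2, 3, 4, 6},
    {2, 3, 4, 7},
    {2, 3, 5, 6},
    {2, 3, 5, 7},
    {2, 3, 6, 7},
    {2, 4, 5, 6},
    {2, 4, 5, 7},
    {2, 4, 6, 7},
    {2, 5, 6, 7},
    {3, 4, 6, 7},
    {3, 5, 6, 7},
    {4, 5, 6, 7} }


section Aux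

variable (K : Type*) [Field K]

lemma sqMon_eq_monomial' {n : ℕ} (S : Finset (Fin n)) :
    sqMon K S = monomial (∑ i ∈ S, Finsupp.single i 1) (1 : K) := by
  rw [sqMon, monomial_sum_one]; rfl

lemma degSum_indicator' {n : ℕ} (S : Finset (Fin n)) :
    (∑ j, (∑ i ∈ S, Finsupp.single i (1 : ℕ)) j) = S.card := by
  simp only [Finsupp.finset_sum_apply]
  rw [Finset.sum_comm]
  simp [Finsupp.single_apply]

lemma sq_span_monomial' {n : ℕ} (E : Set (Fin n →₀ ℕ)) :
    (Ideal.span ((fun s => monomial s (1 : K)) '' E)) ^ 2 =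
      Ideal.span ((fun s => monomial s (1 : K)) '' Set.image2 (· + ·) E E) := by
  rw [pow_two, Ideal.span_mul_span']
  congr 1
  rw [← Set.image2_mul, Set.image2_image_left, Set.image2_image_right, Set.image_image2]
  apply Set.image2_congr
  intro a _ b _
  simp [monomial_mul]

lemma matIdeal_eq_span_monomial {n : ℕ} (B : Finset (Finset (Fin n))) :
    matIdeal K B = Ideal.span ((fun s => monomial s (1 : K)) ''
      ((fun S => ∑ i ∈ S, Finsupp.single i 1) '' (↑B : Set (Finset (Fin n))))) := by
  rw [matIdeal, Set.image_image]
  congr 1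
  apply Set.image_congr
  intro S _
  exact sqMon_eq_monomial' K S

lemma maxIdeal_eq_ker (n : ℕ) :
    maxIdeal K n = RingHom.ker (constantCoeff : MvPolynomial (Fin n) K →+* K) := by
  ext p
  rw [maxIdeal, ← Set.image_univ, mem_ideal_span_X_image, RingHom.mem_ker]
  constructor
  · intro h
    rw [constantCoeff_eq]
    by_contra hc
    obtain ⟨i, -, hi⟩ := h 0 (mem_support_iff.mpr hc)
    simp at hi
  · intro h m hm
    by_contra hc
    push_neg at hc
    have hm0 : m = 0 := by
      ext j; simpa using hc j (Set.mem_univ j)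
    rw [hm0] at hm
    exact mem_support_iff.mp hm h

lemma maxIdeal_isMaximal (n : ℕ) : (maxIdeal K n).IsMaximal := by
  rw [maxIdeal_eq_ker]
  exact RingHom.ker_isMaximal_of_surjective _ fun a => ⟨C a, constantCoeff_C _ a⟩

lemma sqMon_expand4 {n : ℕ} (a b c d : Fin n)
    (h1 : a ∉ ({b, c, d} : Finset (Fin n))) (h2 : b ∉ ({c, d} : Finset (Fin n)))
    (h3 : c ∉ ({d} : Finset (Fin n))) :
    sqMon K {a, b, c, d} = X a * (X b * (X c * X d)) := by
  rw [sqMon, Finset.prod_insert h1, Finset.prod_insert h2, Finset.prod_insert h3,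
    Finset.prod_singleton]

lemma sqMon_expand7 {n : ℕ} (a b c d e f g : Fin n)
    (h1 : a ∉ ({b, c, d, e, f, g} : Finset (Fin n)))
    (h2 : b ∉ ({c, d, e, f, g} : Finset (Fin n)))
    (h3 : c ∉ ({d, e, f, g} : Finset (Fin n)))
    (h4 : d ∉ ({e, f, g} : Finset (Fin n)))
    (h5 : e ∉ ({f, g} : Finset (Fin n)))
    (h6 : f ∉ ({g} : Finset (Fin n))) :
    sqMon K {a, b, c, d, e, f, g} = X a * (X b * (X c * (X d * (X e * (X f * X g))))) := by
  rw [sqMon, Finset.prod_insert h1, Finset.prod_insert h2, Finset.prod_insert h3,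
    Finset.prod_insert h4, Finset.prod_insert h5, Finset.prod_insert h6, Finset.prod_singleton]

set_option maxRecDepth 4000 in
/-- `u ∉ I²` for the counterexample ideal. -/
lemma u_not_mem_sq : sqMon K ({0, 1, 2, 4, 5, 6, 7} : Finset (Fin 8)) ∉
    (matIdeal K exBases) ^ 2 := by
  intro hmem
  rw [matIdeal_eq_span_monomial, sq_span_monomial', sqMon_eq_monomial'] at hmem
  rw [mem_ideal_span_monomial_image] at hmem
  obtain ⟨si, hsi, hle⟩ := hmem
    (∑ i ∈ ({0, 1, 2, 4, 5, 6, 7} : Finset (Fin 8)), Finsupp.single i 1)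
    (by simp [support_monomial])
  obtain ⟨a, ha, b, hb, rfl⟩ := hsi
  obtain ⟨S, hS, rfl⟩ := ha
  obtain ⟨T, hT, rfl⟩ := hb
  have hptle := Finsupp.le_def.mp hle
  have hsum := Finset.sum_le_sum (s := (Finset.univ : Finset (Fin 8))) fun j _ => hptle j
  simp only [Finsupp.add_apply, Finset.sum_add_distrib, degSum_indicator'] at hsum
  have hScard : S.card = 4 := by
    have h4 : ∀ S ∈ exBases, S.card = 4 := by decide
    exact h4 S hS
  have hTcard : T.card = 4 := by
    have h4 : ∀ S ∈ exBases, S.card = 4 := by decide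
    exact h4 T hT
  have hUcard : ({0, 1, 2, 4, 5, 6, 7} : Finset (Fin 8)).card = 7 := by decide
  rw [hScard, hTcard, hUcard] at hsum
  norm_num at hsum

end Aux

set_option maxRecDepth 4000 in
/-- for the matroidal ideal `I` above,
`(I² : x₁x₂x₃x₅x₆x₇x₈) = (x₁, …, x₈)`. -/
theorem stmt13 (K : Type*) [Field K] (I : Ideal (MvPolynomial (Fin 8) K))
    (hI : I = matIdeal K exBases) :
    Submodule.colon (I ^ 2)
        (Ideal.span {sqMon K ({0, 1, 2, 4, 5, 6, 7} : Finset (Fin 8))}) =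
      maxIdeal K 8 := by
  subst hI
  set I : Ideal (MvPolynomial (Fin 8) K) := matIdeal K exBases with hIdef
  set u : MvPolynomial (Fin 8) K := sqMon K ({0, 1, 2, 4, 5, 6, 7} : Finset (Fin 8)) with hu
  have hgen : ∀ S ∈ exBases, sqMon K S ∈ I := fun S hS =>
    Ideal.subset_span ⟨S, hS, rfl⟩
  have hXu : ∀ i : Fin 8, X i * u ∈ I ^ 2 := by
    have key : ∀ S ∈ exBases, ∀ T ∈ exBases, ∀ i : Fin 8,
        X i * u = sqMon K S * sqMon K T → X i * u ∈ I ^ 2 := by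
      intro S hS T hT i h
      rw [h, pow_two]
      exact Ideal.mul_mem_mul (hgen S hS) (hgen T hT)
    have hexp : u = X 0 * (X 1 * (X 2 * (X 4 * (X 5 * (X 6 * X 7))))) :=
      sqMon_expand7 K 0 1 2 4 5 6 7 (by decide) (by decide) (by decide) (by decide)
        (by decide) (by decide)
    intro i
    fin_cases i
    · exact key {0,1,2,4} (by decide) {0,5,6,7} (by decide) 0 (by
        rw [hexp, sqMon_expand4 K 0 1 2 4 (by decide) (by decide) (by decide),
          sqMon_expand4 K 0 5 6 7 (by decide) (by decide) (by decide)]; ring)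
    · exact key {0,1,2,4} (by decide) {1,5,6,7} (by decide) 1 (by
        rw [hexp, sqMon_expand4 K 0 1 2 4 (by decide) (by decide) (by decide),
          sqMon_expand4 K 1 5 6 7 (by decide) (by decide) (by decide)]; ring)
    · exact key {0,1,2,4} (by decide) {2,5,6,7} (by decide) 2 (by
        rw [hexp, sqMon_expand4 K 0 1 2 4 (by decide) (by decide) (by decide),
          sqMon_expand4 K 2 5 6 7 (by decide) (by decide) (by decide)]; ring)
    · exact key {0,1,2,3} (by decide) {4,5,6,7} (by decide) 3 (by
        rw [hexp, sqMon_expand4 K 0 1 2 3 (by decide) (by decide) (by decide),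
          sqMon_expand4 K 4 5 6 7 (by decide) (by decide) (by decide)]; ring)
    · exact key {0,1,2,4} (by decide) {4,5,6,7} (by decide) 4 (by
        rw [hexp, sqMon_expand4 K 0 1 2 4 (by decide) (by decide) (by decide),
          sqMon_expand4 K 4 5 6 7 (by decide) (by decide) (by decide)]; ring)
    · exact key {0,1,2,5} (by decide) {4,5,6,7} (by decide) 5 (by
        rw [hexp, sqMon_expand4 K 0 1 2 5 (by decide) (by decide) (by decide),
          sqMon_expand4 K 4 5 6 7 (by decide) (by decide) (by decide)]; ring)
    · exact key {0,1,4,6} (by decide) {2,5,6,7} (by decide) 6 (by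
        rw [hexp, sqMon_expand4 K 0 1 4 6 (by decide) (by decide) (by decide),
          sqMon_expand4 K 2 5 6 7 (by decide) (by decide) (by decide)]; ring)
    · exact key {0,1,2,7} (by decide) {4,5,6,7} (by decide) 7 (by
        rw [hexp, sqMon_expand4 K 0 1 2 7 (by decide) (by decide) (by decide),
          sqMon_expand4 K 4 5 6 7 (by decide) (by decide) (by decide)]; ring)
  have hle : maxIdeal K 8 ≤ Submodule.colon (I ^ 2) (Ideal.span {u}) := by
    rw [maxIdeal, Ideal.span_le]
    rintro _ ⟨i, rfl⟩
    exact Ideal.mem_colon_span_singleton.mpr (hXu i)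
  have hne : Submodule.colon (I ^ 2) (Ideal.span {u}) ≠ ⊤ := by
    intro htop
    have h1 : (1 : MvPolynomial (Fin 8) K) ∈ Submodule.colon (I ^ 2) (Ideal.span {u}) := by
      rw [htop]; trivial
    rw [Ideal.mem_colon_span_singleton, one_mul] at h1
    exact u_not_mem_sq K h1
  exact ((maxIdeal_isMaximal K 8).eq_of_le hne hle).symm
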